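/- Lemma 4.3(i) (one-step Fejér-type inequality for the relaxed G-FBS iteration with relaxation operator M): Let x, x̃, x⁺ ∈ H satisfy Q x − B x − Q x̃ ∈ A x̃ and x⁺ = x + M(x̃ − x), and let x⋆ ∈ H satisfy −B x⋆ ∈ A x⋆. Then ‖x⁺ − x⋆‖_S² ≤ ‖x − x⋆‖_S² − ‖x − x̃‖_G², i.e. ⟪S(x⁺ − x⋆), x⁺ − x⋆⟫ ≤ ⟪S(x − x⋆), x − x⋆⟫ − ⟪G(x − x̃), x − x̃⟫ (note that M⁻¹(x − x⁺) = x − x̃, so the subtracted term equals the paper's ‖x − x⁺‖²_{M⁻ᵀ G M⁻¹}). -/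

import Mathlib

open RealInnerProductSpace

/-- Lemma 4.3(i): one-step Fejér-type inequality for the relaxed G-FBS iteration
with relaxation operator `M`. -/
theorem stmt_7
    {H : Type*} [NormedAddCommGroup H] [InnerProductSpace ℝ H] [CompleteSpace H]
    (Q : H →L[ℝ] H)
    (Qt : H →L[ℝ] H) (hQt : Qt = (1 / 2 : ℝ) • (Q + ContinuousLinearMap.adjoint Q))
    (hQtpos : ∀ x : H, 0 ≤ ⟪Qt x, x⟫)
    (ν : ℝ) (hν : 0 < ν)
    (hνQ : ∀ w ∈ (LinearMap.ker (Qt : H →ₗ[ℝ] H))ᗮ, ν * ‖w‖ ≤ ‖Qt w‖)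
    (M : H ≃L[ℝ] H)
    (β : ℝ) (hβ : 0 ≤ β)
    (B : H → H)
    (hB : ∀ x y : H, ‖B x - B y‖ ^ 2 ≤ β * ⟪B x - B y, x - y⟫)
    (hranB : Set.range B ⊆ Set.range Qt)
    (S : H →L[ℝ] H) (hS : S = Q ∘L (M.symm : H →L[ℝ] H))
    (hSsym : ∀ x y : H, ⟪S x, y⟫ = ⟪x, S y⟫)
    (hSpos : ∀ x : H, 0 ≤ ⟪S x, x⟫)
    (G : H →L[ℝ] H)
    (hG : G = (1 - β / (4 * ν)) • (Q + ContinuousLinearMap.adjoint Q) -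
      (ContinuousLinearMap.adjoint (M : H →L[ℝ] H)) ∘L Q)
    (hGsym : ∀ x y : H, ⟪G x, y⟫ = ⟪x, G y⟫)
    (hGpos : ∀ x : H, 0 ≤ ⟪G x, x⟫)
    (A : H → Set H)
    (hA : ∀ x y u v : H, u ∈ A x → v ∈ A y → 0 ≤ ⟪u - v, x - y⟫)
    (x xt xp xs : H)
    (hxt : Q x - B x - Q xt ∈ A xt)
    (hxp : xp = x + M (xt - x))
    (hxs : -B xs ∈ A xs) :
    ⟪S (xp - xs), xp - xs⟫ ≤ ⟪S (x - xs), x - xs⟫ - ⟪G (x - xt), x - xt⟫ := by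
  classical
  set e := x - xt with he
  set d := x - xs with hd
  set w := B x - B xs with hw
  clear_value e d w
  -- symmetry of Qt and equality of quadratic forms
  have hQtsym : ∀ a b : H, ⟪Qt a, b⟫ = ⟪a, Qt b⟫ := by
    intro a b
    simp only [hQt, ContinuousLinearMap.coe_smul', Pi.smul_apply,
      ContinuousLinearMap.add_apply, smul_eq_mul, inner_add_left, inner_add_right,
      real_inner_smul_left, real_inner_smul_right,
      ContinuousLinearMap.adjoint_inner_left, ContinuousLinearMap.adjoint_inner_right]
    ring
  have hQtQ : ∀ v : H, ⟪Qt v, v⟫ = ⟪Q v, v⟫ := by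
    intro v
    simp only [hQt, ContinuousLinearMap.coe_smul', Pi.smul_apply,
      ContinuousLinearMap.add_apply, smul_eq_mul, inner_add_left,
      real_inner_smul_left, ContinuousLinearMap.adjoint_inner_left]
    have := real_inner_comm v (Q v)
    linarith
  -- w lies in the range of Qt
  have hwrange : ∃ z : H, Qt z = w := by
    obtain ⟨z1, hz1⟩ := hranB ⟨x, rfl⟩
    obtain ⟨z2, hz2⟩ := hranB ⟨xs, rfl⟩
    exact ⟨z1 - z2, by rw [map_sub, hz1, hz2, hw]⟩
  -- key estimate : ⟪w, e⟫ - ⟪w, d⟫ ≤ (β/(4ν)) ⟪Q e, e⟫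
  have hcoco : ‖w‖ ^ 2 ≤ β * ⟪w, d⟫ := by rw [hw, hd]; exact hB x xs
  have hQee : 0 ≤ ⟪Q e, e⟫ := by rw [← hQtQ]; exact hQtpos e
  have hkey : ⟪w, e⟫ - ⟪w, d⟫ ≤ β / (4 * ν) * ⟪Q e, e⟫ := by
    rcases eq_or_lt_of_le hβ with hβ0 | hβpos
    · have hc0 : ‖w‖ ^ 2 ≤ 0 := by rw [← hβ0] at hcoco; simpa using hcoco
      have hw0 : w = 0 := by
        have : ‖w‖ = 0 := le_antisymm (by nlinarith [norm_nonneg w]) (norm_nonneg w)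
        exact norm_eq_zero.mp this
      simp [hw0, ← hβ0]
    · -- construct z₁ ∈ (ker Qt)ᗮ with Qt z₁ = w
      obtain ⟨z, hz⟩ := hwrange
      haveI : CompleteSpace (LinearMap.ker (Qt : H →ₗ[ℝ] H)) := Qt.isClosed_ker.completeSpace_coe
      set z₁ := z - (Submodule.orthogonalProjectionOnto (LinearMap.ker (Qt : H →ₗ[ℝ] H)) z : H) with hz₁
      have hz₁mem : z₁ ∈ (LinearMap.ker (Qt : H →ₗ[ℝ] H))ᗮ :=
        Submodule.sub_starProjection_mem_orthogonal (K := (LinearMap.ker (Qt : H →ₗ[ℝ] H))) z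
      have hQz₁ : Qt z₁ = w := by
        have h0 : Qt ((Submodule.orthogonalProjectionOnto (LinearMap.ker (Qt : H →ₗ[ℝ] H)) z : H)) = 0 :=
          (Submodule.orthogonalProjectionOnto (LinearMap.ker (Qt : H →ₗ[ℝ] H)) z).2
        rw [hz₁, map_sub, h0, sub_zero, hz]
      have hz₁norm : ν * ‖z₁‖ ≤ ‖w‖ := by
        have := hνQ z₁ hz₁mem; rwa [hQz₁] at this
      have hwz₁ : ⟪w, z₁⟫ ≤ ‖w‖ ^ 2 / ν := by
        have h1 : ⟪w, z₁⟫ ≤ ‖w‖ * ‖z₁‖ := real_inner_le_norm w z₁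
        rw [le_div_iff₀ hν]
        nlinarith [norm_nonneg w, norm_nonneg z₁]
      set t : ℝ := 2 * ν / β with ht
      have htpos : 0 < t := by positivity
      have hq : 0 ≤ ⟪Qt (t • z₁ - e), t • z₁ - e⟫ := hQtpos _
      have hexp : ⟪Qt (t • z₁ - e), t • z₁ - e⟫
          = t ^ 2 * ⟪w, z₁⟫ - 2 * t * ⟪w, e⟫ + ⟪Qt e, e⟫ := by
        rw [map_sub, map_smul]
        simp only [inner_sub_left, inner_sub_right, real_inner_smul_left,
          real_inner_smul_right, hQz₁]
        have h1 : ⟪Qt e, z₁⟫ = ⟪w, e⟫ := by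
          rw [hQtsym e z₁, hQz₁, real_inner_comm]
        rw [h1]
        ring
      have hQte : ⟪Qt e, e⟫ = ⟪Q e, e⟫ := hQtQ e
      -- 2⟪w,e⟫ ≤ t⟪w,z₁⟫ + (1/t)⟪Qt e,e⟫ after dividing by t
      have h2 : 2 * t * ⟪w, e⟫ ≤ t ^ 2 * ⟪w, z₁⟫ + ⟪Q e, e⟫ := by
        rw [← hQte]; linarith [hq, hexp.le, hexp.ge]
      have hwd : ‖w‖ ^ 2 / β ≤ ⟪w, d⟫ := by
        rw [div_le_iff₀ hβpos]; linarith
      have step1 : t ^ 2 * ⟪w, z₁⟫ ≤ t ^ 2 * (‖w‖ ^ 2 / ν) :=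
        mul_le_mul_of_nonneg_left hwz₁ (sq_nonneg t)
      have step2 : t ^ 2 * (‖w‖ ^ 2 / ν) = 2 * t * (‖w‖ ^ 2 / β) := by
        rw [ht]; field_simp
      have step3 : 2 * t * (‖w‖ ^ 2 / β) ≤ 2 * t * ⟪w, d⟫ :=
        mul_le_mul_of_nonneg_left hwd (by positivity)
      have hfin : 2 * t * ⟪w, e⟫ - 2 * t * ⟪w, d⟫ ≤ ⟪Q e, e⟫ := by linarith
      have hdiveq : ⟪Q e, e⟫ / (2 * t) = β / (4 * ν) * ⟪Q e, e⟫ := by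
        rw [ht]; field_simp; ring
      rw [← hdiveq, le_div_iff₀ (by positivity : (0:ℝ) < 2 * t)]
      linarith [hfin]
  -- monotonicity of A
  have hmono : 0 ≤ ⟪Q e - w, d - e⟫ := by
    have h := hA xt xs _ _ hxt hxs
    have h1 : Q x - B x - Q xt - (-B xs) = Q e - w := by
      simp only [he, hw, map_sub]; abel
    have h2 : xt - xs = d - e := by simp only [hd, he]; abel
    rwa [h1, h2] at h
  have hmono' : ⟪Q e, e⟫ + ⟪w, d⟫ - ⟪w, e⟫ ≤ ⟪Q e, d⟫ := by
    have := hmono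
    simp only [inner_sub_left, inner_sub_right] at this
    linarith
  -- expansion of the left-hand side
  have hxpd : xp - xs = d - M e := by
    rw [hxp]; simp only [hd, he, map_sub]; abel
  have hSMe : S (M e) = Q e := by
    rw [hS]; simp [ContinuousLinearMap.comp_apply]
  have hLHS : ⟪S (xp - xs), xp - xs⟫
      = ⟪S d, d⟫ - 2 * ⟪Q e, d⟫ + ⟪Q e, M e⟫ := by
    rw [hxpd]
    have h1 : ⟪S d, M e⟫ = ⟪Q e, d⟫ := by
      rw [hSsym d (M e), hSMe, real_inner_comm]
    have h2 : ⟪S (M e), d⟫ = ⟪Q e, d⟫ := by rw [hSMe]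
    simp only [map_sub, inner_sub_left, inner_sub_right, h1, h2, hSMe]
    ring
  -- expansion of ⟪G e, e⟫
  have hGe : ⟪G e, e⟫ = 2 * (1 - β / (4 * ν)) * ⟪Q e, e⟫ - ⟪Q e, M e⟫ := by
    rw [hG]
    simp only [ContinuousLinearMap.sub_apply, ContinuousLinearMap.coe_smul',
      Pi.smul_apply, ContinuousLinearMap.add_apply, ContinuousLinearMap.comp_apply,
      smul_eq_mul, inner_sub_left, inner_add_left, real_inner_smul_left,
      ContinuousLinearMap.adjoint_inner_left, ContinuousLinearEquiv.coe_coe]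
    rw [real_inner_comm e (Q e)]
    ring
  rw [hLHS, hGe]
  linarith [hmono', hkey]
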